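/- arXiv:2002.09385 — 6 statements merged into one kernel-verified Lean document; each statement's English description precedes it below -/
import Mathlib

section
/- For positive reals x ≠ y, the limit of S_{α,β}(x,y) as (α,β) → (0,1) (i.e., the Stolarsky mean S_{0,1}) equals the logarithmic mean (x - y)/(log x - log y). -/
open Filter

/-- The weighted Stolarsky mean. -/
noncomputable def stolarsky (α β x y : ℝ) : ℝ :=
  ((β * (x ^ α - y ^ α)) / (α * (x ^ β - y ^ β))) ^ (1 / (α - β))

/-- The Stolarsky mean `S_{0,1}`, i.e. the limit of `S_{α,1}` as `α → 0`,
equals the logarithmic mean `(x - y)/(log x - log y)`. -/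
theorem stolarsky_zero_one_eq_logMean (x y : ℝ) (hx : 0 < x) (hy : 0 < y) (hxy : x ≠ y) :
    Tendsto (fun α => stolarsky α 1 x y) (nhdsWithin 0 {(0 : ℝ)}ᶜ)
      (nhds ((x - y) / (Real.log x - Real.log y))) := by
  have hD : x - y ≠ 0 := sub_ne_zero.mpr hxy
  have hL : Real.log x - Real.log y ≠ 0 := by
    refine sub_ne_zero.mpr fun h => hxy ?_
    have := congrArg Real.exp h
    rwa [Real.exp_log hx, Real.exp_log hy] at this
  -- derivative of α ↦ x^α - y^α at 0
  have hdx : HasDerivAt (fun α : ℝ => x ^ α - y ^ α) (Real.log x - Real.log y) 0 := by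
    have h1 := (Real.hasStrictDerivAt_const_rpow hx 0).hasDerivAt
    have h2 := (Real.hasStrictDerivAt_const_rpow hy 0).hasDerivAt
    exact (h1.sub h2).congr_deriv (by simp)
  have h1 : Tendsto (fun α : ℝ => (x ^ α - y ^ α) / α) (nhdsWithin 0 {(0 : ℝ)}ᶜ)
      (nhds (Real.log x - Real.log y)) := by
    have := hasDerivAt_iff_tendsto_slope.mp hdx
    have heq : slope (fun α : ℝ => x ^ α - y ^ α) 0 = fun α : ℝ => (x ^ α - y ^ α) / α := by
      funext α
      simp [slope_def_field, div_eq_inv_mul]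
    rw [heq] at this
    exact this
  have h2 : Tendsto (fun α : ℝ => (1 * (x ^ α - y ^ α)) / (α * (x ^ (1:ℝ) - y ^ (1:ℝ))))
      (nhdsWithin 0 {(0 : ℝ)}ᶜ)
      (nhds ((Real.log x - Real.log y) / (x - y))) := by
    have := h1.div_const (x - y)
    refine this.congr fun α => ?_
    rw [Real.rpow_one, Real.rpow_one]
    rw [div_div, one_mul]
  have h3 : Tendsto (fun α : ℝ => 1 / (α - 1)) (nhdsWithin 0 {(0 : ℝ)}ᶜ) (nhds (-1)) := by
    have : ContinuousAt (fun α : ℝ => 1 / (α - 1)) 0 := by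
      apply ContinuousAt.div continuousAt_const (by fun_prop)
      norm_num
    have h := this.tendsto.mono_left (nhdsWithin_le_nhds (s := {(0:ℝ)}ᶜ))
    simpa using h
  have h4 := h2.rpow h3 (Or.inl (div_ne_zero hL hD))
  have hval : ((Real.log x - Real.log y) / (x - y)) ^ (-1 : ℝ)
      = (x - y) / (Real.log x - Real.log y) := by
    rw [Real.rpow_neg_one, inv_div]
  rw [hval] at h4
  exact h4
end

section
/- For positive reals x ≠ y, the continuous extension of the Stolarsky mean to parameters (0,-1) equals the Scharfetter–Gummel mean: S_{0,-1}(x,y) = xy·(log x - log y)/(x - y). -/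
open Filter

/-- The continuous extension `S_{0,-1}`, i.e. the limit of `S_{α,-1}` as `α → 0`,
equals the Scharfetter--Gummel mean `xy (log x - log y)/(x - y)`. -/
theorem stolarsky_zero_neg_one_eq_SGMean (x y : ℝ) (hx : 0 < x) (hy : 0 < y) (hxy : x ≠ y) :
    Tendsto (fun α => stolarsky α (-1) x y) (nhdsWithin 0 {(0 : ℝ)}ᶜ)
      (nhds (x * y * (Real.log x - Real.log y) / (x - y))) := by
  set L : ℝ := x * y * (Real.log x - Real.log y) / (x - y) with hL
  have hxy' : x - y ≠ 0 := sub_ne_zero.mpr hxy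
  have hlog : Real.log x - Real.log y ≠ 0 := by
    intro h
    exact hxy (Real.log_injOn_pos (Set.mem_Ioi.mpr hx) (Set.mem_Ioi.mpr hy)
      (by linarith [sub_eq_zero.mp h]))
  have hLne : L ≠ 0 := by
    apply div_ne_zero _ hxy'
    exact mul_ne_zero (mul_ne_zero hx.ne' hy.ne') hlog
  -- derivative fact
  have hD : HasDerivAt (fun α : ℝ => x ^ α - y ^ α) (Real.log x - Real.log y) 0 := by
    have h1 := (Real.hasStrictDerivAt_const_rpow hx 0).hasDerivAt
    have h2 := (Real.hasStrictDerivAt_const_rpow hy 0).hasDerivAt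
    have h := h1.sub h2
    simp only [Real.rpow_zero, one_mul] at h
    exact h
  have hslope : Tendsto (fun α : ℝ => (x ^ α - y ^ α) / α) (nhdsWithin 0 {(0 : ℝ)}ᶜ)
      (nhds (Real.log x - Real.log y)) := by
    have := hasDerivAt_iff_tendsto_slope.mp hD
    refine this.congr fun α => ?_
    simp [slope, Real.rpow_zero, div_eq_inv_mul]
  -- constant factor
  set c : ℝ := x ^ (-1 : ℝ) - y ^ (-1 : ℝ) with hc
  have hcval : c = (y - x) / (x * y) := by
    rw [hc, Real.rpow_neg_one, Real.rpow_neg_one]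
    field_simp
  have hcne : c ≠ 0 := by
    rw [hcval]
    exact div_ne_zero (sub_ne_zero.mpr (Ne.symm hxy)) (mul_ne_zero hx.ne' hy.ne')
  -- base tends to L
  have hbase : Tendsto (fun α : ℝ => (-1) * (x ^ α - y ^ α) / (α * c))
      (nhdsWithin 0 {(0 : ℝ)}ᶜ) (nhds L) := by
    have key : ∀ α : ℝ, (-1) * (x ^ α - y ^ α) / (α * c)
        = ((x ^ α - y ^ α) / α) * (-1 / c) := by
      intro α
      field_simp
    have hlim : (Real.log x - Real.log y) * (-1 / c) = L := by
      have hyx : y - x ≠ 0 := sub_ne_zero.mpr (Ne.symm hxy)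
      rw [hcval, hL]
      field_simp
      ring
    rw [← hlim]
    exact (hslope.mul_const _).congr fun α => (key α).symm
  -- exponent tends to 1
  have hexp : Tendsto (fun α : ℝ => 1 / (α - (-1))) (nhdsWithin 0 {(0 : ℝ)}ᶜ) (nhds 1) := by
    have : ContinuousAt (fun α : ℝ => 1 / (α - (-1))) 0 := by
      apply ContinuousAt.div continuousAt_const (by fun_prop)
      norm_num
    have h := this.tendsto.mono_left (nhdsWithin_le_nhds (s := {(0:ℝ)}ᶜ))
    simpa using h
  have := hbase.rpow hexp (Or.inl hLne)
  simpa [stolarsky, Real.rpow_one] using this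
end

section
/- For the weighted Stolarsky mean S_{α,β} with α > β, αβ ≠ 0, the second derivative on the diagonal satisfies ∂ₓ²S_{α,β}(x,x) = (α + β - 3)/(12x) for all x > 0. -/
open Filter Real

/-- The weighted Stolarsky mean, extended continuously to the diagonal. -/
noncomputable def stolarskyExt (α β x y : ℝ) : ℝ :=
  if x = y then x
  else ((β * (x ^ α - y ^ α)) / (α * (x ^ β - y ^ β))) ^ (1 / (α - β))


lemma analyticAt_deriv' {g : ℝ → ℝ} {y : ℝ} (hy : AnalyticAt ℝ g y) :
    AnalyticAt ℝ (deriv g) y :=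
  ((ContinuousLinearMap.apply ℝ ℝ (1:ℝ)).analyticAt _).comp hy.fderiv

lemma stolarsky_aux_exists (γ : ℝ) (hγ : γ ≠ 0) :
    ∃ g : ℝ → ℝ, AnalyticAt ℝ g 0 ∧ g 0 = γ ∧ deriv g 0 = γ * (γ - 1) / 2 ∧
      deriv (deriv g) 0 = γ * (γ - 1) * (γ - 2) / 3 ∧
      ∀ᶠ s in nhds (0:ℝ), (1 + s) ^ γ - 1 = s * g s := by
  set f : ℝ → ℝ := fun s => (1 + s) ^ γ - 1 with hf_def
  have hpos : ∀ᶠ s in nhds (0:ℝ), 0 < 1 + s := by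
    have hcont : ContinuousAt (fun s : ℝ => 1 + s) 0 := by fun_prop
    have := hcont.eventually (p := fun y => 0 < y) ?_
    · simpa using this
    · exact eventually_gt_nhds (by norm_num)
  have hfd : ∀ᶠ s in nhds (0:ℝ), HasDerivAt f (γ * (1 + s) ^ (γ - 1)) s := by
    filter_upwards [hpos] with s hs
    have h1 : HasDerivAt (fun u : ℝ => 1 + u) 1 s := by
      simpa using (hasDerivAt_id s).const_add (1:ℝ)
    have h2 := (Real.hasDerivAt_rpow_const (x := 1 + s) (p := γ) (Or.inl hs.ne')).comp s h1
    simpa [hf_def] using (h2.sub_const 1)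
  have hf0 : HasDerivAt f γ 0 := by
    have := hfd.self_of_nhds
    simpa using this
  have hf_an : AnalyticAt ℝ f 0 := by
    have : ContDiffAt ℝ (⊤ : WithTop ℕ∞) f 0 := by
      have h1 : ContDiffAt ℝ (⊤ : WithTop ℕ∞) (fun s : ℝ => 1 + s) 0 :=
        (contDiffAt_const.add contDiffAt_id)
      exact (h1.rpow_const_of_ne (by norm_num)).sub contDiffAt_const
    exact this.analyticAt
  have hnz : ¬ ∀ᶠ s in nhds (0:ℝ), f s = 0 := by
    intro h
    have : deriv f 0 = 0 := by
      have := Filter.EventuallyEq.deriv_eq (f := fun _ : ℝ => (0:ℝ)) (h.mono fun s hs => hs)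
      simpa using this
    rw [hf0.deriv] at this
    exact hγ this
  obtain ⟨n, g, hg_an, hg0_ne, h_eq⟩ := hf_an.exists_eventuallyEq_pow_smul_nonzero_iff.mpr hnz
  simp only [sub_zero, smul_eq_mul] at h_eq
  have hfzero : f 0 = 0 := by simp [hf_def]
  have hgd0 : HasDerivAt g (deriv g 0) 0 := hg_an.differentiableAt.hasDerivAt
  have hprod : HasDerivAt (fun s : ℝ => s ^ n * g s)
      ((n : ℝ) * 0 ^ (n - 1) * g 0 + 0 ^ n * deriv g 0) 0 :=
    (hasDerivAt_pow n 0).mul hgd0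
  have hderiv_eq : γ = (n : ℝ) * 0 ^ (n - 1) * g 0 + 0 ^ n * deriv g 0 := by
    have h1 : deriv f 0 = deriv (fun s : ℝ => s ^ n * g s) 0 := Filter.EventuallyEq.deriv_eq h_eq
    rw [hf0.deriv, hprod.deriv] at h1
    exact h1
  have hn1 : n = 1 := by
    rcases n with _ | _ | m
    · exfalso
      have h0 := h_eq.self_of_nhds
      rw [hfzero] at h0
      simp at h0
      exact hg0_ne h0.symm
    · rfl
    · exfalso
      apply hγ
      rw [hderiv_eq]
      simp [pow_succ]
  subst hn1
  have hfac : ∀ᶠ s in nhds (0:ℝ), f s = s * g s := by simpa using h_eq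
  have hg0 : g 0 = γ := by rw [hderiv_eq]; simp
  have ev_an : ∀ᶠ s in nhds (0:ℝ), AnalyticAt ℝ g s := hg_an.eventually_analyticAt
  have ev_an1 : ∀ᶠ s in nhds (0:ℝ), AnalyticAt ℝ (deriv g) s :=
    ev_an.mono fun s hs => analyticAt_deriv' hs
  have ev_an2 : ∀ᶠ s in nhds (0:ℝ), AnalyticAt ℝ (deriv (deriv g)) s :=
    ev_an1.mono fun s hs => analyticAt_deriv' hs
  have E1 : ∀ᶠ s in nhds (0:ℝ), γ * (1 + s) ^ (γ - 1) = g s + s * deriv g s := by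
    have h1 : deriv f =ᶠ[nhds 0] deriv (fun s : ℝ => s * g s) :=
      Filter.EventuallyEq.deriv hfac
    filter_upwards [h1, hfd, ev_an] with s h1s hfds hans
    have h2 : HasDerivAt (fun u : ℝ => u * g u) (1 * g s + s * deriv g s) s :=
      (hasDerivAt_id s).mul hans.differentiableAt.hasDerivAt
    rw [← hfds.deriv, h1s, h2.deriv]; ring
  have E2 : ∀ᶠ s in nhds (0:ℝ), γ * ((γ - 1) * (1 + s) ^ (γ - 2)) =
      2 * deriv g s + s * deriv (deriv g) s := by
    have h1 : deriv (fun s : ℝ => γ * (1 + s) ^ (γ - 1)) =ᶠ[nhds 0]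
        deriv (fun s : ℝ => g s + s * deriv g s) := Filter.EventuallyEq.deriv E1
    filter_upwards [h1, hpos, ev_an, ev_an1] with s h1s hs han han1
    have hL : HasDerivAt (fun s : ℝ => γ * (1 + s) ^ (γ - 1))
        (γ * ((γ - 1) * (1 + s) ^ (γ - 1 - 1) * 1)) s := by
      have hin : HasDerivAt (fun u : ℝ => 1 + u) 1 s := by
        simpa using (hasDerivAt_id s).const_add (1:ℝ)
      exact ((Real.hasDerivAt_rpow_const (x := 1 + s) (p := γ - 1)
        (Or.inl hs.ne')).comp s hin).const_mul γ
    have hR : HasDerivAt (fun s : ℝ => g s + s * deriv g s)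
        (deriv g s + (1 * deriv g s + s * deriv (deriv g) s)) s :=
      han.differentiableAt.hasDerivAt.add
        ((hasDerivAt_id s).mul han1.differentiableAt.hasDerivAt)
    have := h1s
    rw [hL.deriv, hR.deriv] at this
    rw [show γ - 1 - 1 = γ - 2 by ring] at this
    linear_combination this
  have E3 : ∀ᶠ s in nhds (0:ℝ), γ * ((γ - 1) * ((γ - 2) * (1 + s) ^ (γ - 3))) =
      3 * deriv (deriv g) s + s * deriv (deriv (deriv g)) s := by
    have h1 : deriv (fun s : ℝ => γ * ((γ - 1) * (1 + s) ^ (γ - 2))) =ᶠ[nhds 0]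
        deriv (fun s : ℝ => 2 * deriv g s + s * deriv (deriv g) s) :=
      Filter.EventuallyEq.deriv E2
    filter_upwards [h1, hpos, ev_an1, ev_an2] with s h1s hs han1 han2
    have hL : HasDerivAt (fun s : ℝ => γ * ((γ - 1) * (1 + s) ^ (γ - 2)))
        (γ * ((γ - 1) * ((γ - 2) * (1 + s) ^ (γ - 2 - 1) * 1))) s := by
      have hin : HasDerivAt (fun u : ℝ => 1 + u) 1 s := by
        simpa using (hasDerivAt_id s).const_add (1:ℝ)
      exact (((Real.hasDerivAt_rpow_const (x := 1 + s) (p := γ - 2)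
        (Or.inl hs.ne')).comp s hin).const_mul (γ - 1)).const_mul γ
    have hR : HasDerivAt (fun s : ℝ => 2 * deriv g s + s * deriv (deriv g) s)
        (2 * deriv (deriv g) s + (1 * deriv (deriv g) s + s * deriv (deriv (deriv g)) s)) s :=
      (han1.differentiableAt.hasDerivAt.const_mul 2).add
        ((hasDerivAt_id s).mul han2.differentiableAt.hasDerivAt)
    have := h1s
    rw [hL.deriv, hR.deriv] at this
    rw [show γ - 2 - 1 = γ - 3 by ring] at this
    linear_combination this
  have e2 := E2.self_of_nhds
  have e3 := E3.self_of_nhds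
  simp only [add_zero, zero_mul, Real.one_rpow] at e2 e3
  norm_num at e2 e3
  exact ⟨g, hg_an, hg0, by linarith, by linarith, by simpa [hf_def] using hfac⟩

/-- The second derivative of the weighted Stolarsky mean in its first argument on the
diagonal equals `(α + β - 3)/(12 x)`. -/
theorem stolarsky_second_deriv_diagonal (α β : ℝ) (hαβ : β < α) (hα : α ≠ 0) (hβ : β ≠ 0)
    (x : ℝ) (hx : 0 < x) :
    deriv (deriv (fun t => stolarskyExt α β t x)) x = (α + β - 3) / (12 * x) := by
  obtain ⟨gA, hanA, hgA0, hgA1, hgA2, hfacA⟩ := stolarsky_aux_exists α hα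
  obtain ⟨gB, hanB, hgB0, hgB1, hgB2, hfacB⟩ := stolarsky_aux_exists β hβ
  have hab : α - β ≠ 0 := sub_ne_zero.mpr hαβ.ne'
  set c : ℝ := 1 / (α - β) with hc_def
  set A : ℝ := x ^ (α - β) with hA_def
  have hA : 0 < A := Real.rpow_pos_of_pos hx _
  set sf : ℝ → ℝ := fun t => t / x - 1 with hsf_def
  have hsfx : sf x = 0 := by simp [hsf_def, div_self hx.ne']
  have hsf' : ∀ t : ℝ, HasDerivAt sf (1 / x) t := by
    intro t
    simpa [hsf_def, div_eq_mul_inv] using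
      (((hasDerivAt_id t).div_const x).sub_const 1)
  have hmap : Filter.Tendsto sf (nhds x) (nhds 0) := by
    have := (hsf' x).continuousAt.tendsto
    rwa [hsfx] at this
  set P : ℝ → ℝ := fun t => A * β / α * (gA (sf t) / gB (sf t)) with hP_def
  have hPx : P x = A := by
    simp only [hP_def, hsfx, hgA0, hgB0]
    field_simp
  -- eventual facts near x
  have evA : ∀ᶠ t in nhds x, (1 + sf t) ^ α - 1 = sf t * gA (sf t) := hmap.eventually hfacA
  have evB : ∀ᶠ t in nhds x, (1 + sf t) ^ β - 1 = sf t * gB (sf t) := hmap.eventually hfacB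
  have evAnA : ∀ᶠ t in nhds x, AnalyticAt ℝ gA (sf t) := hmap.eventually hanA.eventually_analyticAt
  have evAnB : ∀ᶠ t in nhds x, AnalyticAt ℝ gB (sf t) := hmap.eventually hanB.eventually_analyticAt
  have evAnA1 : ∀ᶠ t in nhds x, AnalyticAt ℝ (deriv gA) (sf t) :=
    evAnA.mono fun t ht => analyticAt_deriv' ht
  have evAnB1 : ∀ᶠ t in nhds x, AnalyticAt ℝ (deriv gB) (sf t) :=
    evAnB.mono fun t ht => analyticAt_deriv' ht
  have evBne : ∀ᶠ t in nhds x, gB (sf t) ≠ 0 := by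
    have h1 : Filter.Tendsto (fun t => gB (sf t)) (nhds x) (nhds β) := by
      have := hanB.continuousAt.tendsto.comp hmap
      rwa [hgB0] at this
    exact h1.eventually (eventually_ne_nhds hβ)
  have evAne : ∀ᶠ t in nhds x, gA (sf t) ≠ 0 := by
    have h1 : Filter.Tendsto (fun t => gA (sf t)) (nhds x) (nhds α) := by
      have := hanA.continuousAt.tendsto.comp hmap
      rwa [hgA0] at this
    exact h1.eventually (eventually_ne_nhds hα)
  have evtpos : ∀ᶠ t in nhds x, 0 < t := eventually_gt_nhds hx
  have tdA : Filter.Tendsto (fun t => gA (sf t)) (nhds x) (nhds α) := by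
    have := hanA.continuousAt.tendsto.comp hmap
    rwa [hgA0] at this
  have tdB : Filter.Tendsto (fun t => gB (sf t)) (nhds x) (nhds β) := by
    have := hanB.continuousAt.tendsto.comp hmap
    rwa [hgB0] at this
  have evPpos : ∀ᶠ t in nhds x, 0 < P t := by
    have tdP : Filter.Tendsto P (nhds x) (nhds (A * β / α * (α / β))) :=
      tendsto_const_nhds.mul (tdA.div tdB hβ)
    have hval : A * β / α * (α / β) = A := by field_simp
    rw [hval] at tdP
    exact tdP.eventually (eventually_gt_nhds hA)
  -- the smooth representation
  have EvStol : (fun t => stolarskyExt α β t x) =ᶠ[nhds x] fun t => P t ^ c := by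
    filter_upwards [evA, evB, evBne, evtpos] with t hA' hB' hBne htpos
    by_cases ht : t = x
    · subst ht
      rw [hPx, stolarskyExt, if_pos rfl, hA_def, ← Real.rpow_mul hx.le]
      rw [mul_one_div_cancel hab, Real.rpow_one]
    · rw [stolarskyExt, if_neg ht]
      congr 1
      have h1s : 1 + sf t = t / x := by simp [hsf_def]
      have hsne : sf t ≠ 0 := by
        simp only [hsf_def, sub_ne_zero]
        intro h
        exact ht (by field_simp at h; linarith)
      have htα : t ^ α - x ^ α = x ^ α * (sf t * gA (sf t)) := by
        rw [← hA', h1s, Real.div_rpow htpos.le hx.le]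
        field_simp [(Real.rpow_pos_of_pos hx α).ne']
      have htβ : t ^ β - x ^ β = x ^ β * (sf t * gB (sf t)) := by
        rw [← hB', h1s, Real.div_rpow htpos.le hx.le]
        field_simp [(Real.rpow_pos_of_pos hx β).ne']
      rw [htα, htβ, hP_def]
      have hxα : x ^ α = A * x ^ β := by
        rw [hA_def, ← Real.rpow_add hx]; ring_nf
      rw [hxα]
      have hxβ : (x:ℝ) ^ β ≠ 0 := (Real.rpow_pos_of_pos hx β).ne'
      field_simp
  set D : ℝ → ℝ := fun t => A * β / α *
      ((deriv gA (sf t) * (1 / x) * gB (sf t) - gA (sf t) * (deriv gB (sf t) * (1 / x))) /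
        gB (sf t) ^ 2) with hD_def
  set F : ℝ → ℝ := fun t => D t * c * P t ^ (c - 1) with hF_def
  -- derivative of P at points near x
  have hPder : ∀ t : ℝ, AnalyticAt ℝ gA (sf t) → AnalyticAt ℝ gB (sf t) → gB (sf t) ≠ 0 →
      HasDerivAt P (D t) t := by
    intro t htA htB htne
    have hDa : HasDerivAt (fun t' => gA (sf t')) (deriv gA (sf t) * (1 / x)) t :=
      (htA.differentiableAt.hasDerivAt).comp t (hsf' t)
    have hDb : HasDerivAt (fun t' => gB (sf t')) (deriv gB (sf t) * (1 / x)) t :=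
      (htB.differentiableAt.hasDerivAt).comp t (hsf' t)
    exact ((hDa.div hDb htne).const_mul (A * β / α))
  have evDerivPhi : ∀ᶠ t in nhds x, deriv (fun t' => P t' ^ c) t = F t := by
    filter_upwards [evAnA, evAnB, evBne, evPpos] with t htA htB htne htpos
    have h1 : HasDerivAt (fun t' => P t' ^ c) (D t * c * P t ^ (c - 1)) t :=
      (hPder t htA htB htne).rpow_const (Or.inl htpos.ne')
    exact h1.deriv
  have derivStol_ev : deriv (fun t => stolarskyExt α β t x) =ᶠ[nhds x] F :=
    (Filter.EventuallyEq.deriv EvStol).trans evDerivPhi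
  have final : deriv (deriv (fun t => stolarskyExt α β t x)) x = deriv F x :=
    Filter.EventuallyEq.deriv_eq derivStol_ev
  rw [final]
  -- HasDerivAt of everything at x
  have hanAx : AnalyticAt ℝ gA (sf x) := by rw [hsfx]; exact hanA
  have hanBx : AnalyticAt ℝ gB (sf x) := by rw [hsfx]; exact hanB
  have hA_x : HasDerivAt (fun t => gA (sf t)) (deriv gA (sf x) * (1 / x)) x :=
    (hanAx.differentiableAt.hasDerivAt).comp x (hsf' x)
  have hB_x : HasDerivAt (fun t => gB (sf t)) (deriv gB (sf x) * (1 / x)) x :=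
    (hanBx.differentiableAt.hasDerivAt).comp x (hsf' x)
  have hA1_x : HasDerivAt (fun t => deriv gA (sf t)) (deriv (deriv gA) (sf x) * (1 / x)) x :=
    ((analyticAt_deriv' hanAx).differentiableAt.hasDerivAt).comp x (hsf' x)
  have hB1_x : HasDerivAt (fun t => deriv gB (sf t)) (deriv (deriv gB) (sf x) * (1 / x)) x :=
    ((analyticAt_deriv' hanBx).differentiableAt.hasDerivAt).comp x (hsf' x)
  have hBnex : gB (sf x) ≠ 0 := by rw [hsfx, hgB0]; exact hβ
  have hPxne : P x ≠ 0 := by rw [hPx]; exact hA.ne'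
  have hP'x : HasDerivAt P (D x) x := hPder x hanAx hanBx hBnex
  have hPowx : HasDerivAt (fun t => P t ^ (c - 1)) (D x * (c - 1) * P x ^ (c - 1 - 1)) x :=
    hP'x.rpow_const (Or.inl hPxne)
  have hN_x : HasDerivAt
      (fun t => deriv gA (sf t) * (1 / x) * gB (sf t) - gA (sf t) * (deriv gB (sf t) * (1 / x)))
      ((deriv (deriv gA) (sf x) * (1 / x) * (1 / x)) * gB (sf x) +
        (deriv gA (sf x) * (1 / x)) * (deriv gB (sf x) * (1 / x)) -
        ((deriv gA (sf x) * (1 / x)) * (deriv gB (sf x) * (1 / x)) +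
          gA (sf x) * (deriv (deriv gB) (sf x) * (1 / x) * (1 / x)))) x :=
    ((hA1_x.mul_const (1 / x)).mul hB_x).sub (hA_x.mul (hB1_x.mul_const (1 / x)))
  have hDen_x : HasDerivAt (fun t => gB (sf t) ^ 2)
      ((2 : ℕ) * gB (sf x) ^ (2 - 1) * (deriv gB (sf x) * (1 / x))) x := hB_x.pow 2
  have hD_x : HasDerivAt D
      (A * β / α *
        ((((deriv (deriv gA) (sf x) * (1 / x) * (1 / x)) * gB (sf x) +
            (deriv gA (sf x) * (1 / x)) * (deriv gB (sf x) * (1 / x)) -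
            ((deriv gA (sf x) * (1 / x)) * (deriv gB (sf x) * (1 / x)) +
              gA (sf x) * (deriv (deriv gB) (sf x) * (1 / x) * (1 / x)))) * gB (sf x) ^ 2 -
          (deriv gA (sf x) * (1 / x) * gB (sf x) -
            gA (sf x) * (deriv gB (sf x) * (1 / x))) *
            ((2 : ℕ) * gB (sf x) ^ (2 - 1) * (deriv gB (sf x) * (1 / x)))) /
          (gB (sf x) ^ 2) ^ 2)) x := by
    have hne2 : gB (sf x) ^ 2 ≠ 0 := pow_ne_zero _ hBnex
    exact ((hN_x.div hDen_x hne2).const_mul (A * β / α))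
  have hF_x : HasDerivAt F
      ((A * β / α *
        ((((deriv (deriv gA) (sf x) * (1 / x) * (1 / x)) * gB (sf x) +
            (deriv gA (sf x) * (1 / x)) * (deriv gB (sf x) * (1 / x)) -
            ((deriv gA (sf x) * (1 / x)) * (deriv gB (sf x) * (1 / x)) +
              gA (sf x) * (deriv (deriv gB) (sf x) * (1 / x) * (1 / x)))) * gB (sf x) ^ 2 -
          (deriv gA (sf x) * (1 / x) * gB (sf x) -
            gA (sf x) * (deriv gB (sf x) * (1 / x))) *
            ((2 : ℕ) * gB (sf x) ^ (2 - 1) * (deriv gB (sf x) * (1 / x)))) /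
          (gB (sf x) ^ 2) ^ 2)) * c * P x ^ (c - 1) +
        (D x * c) * (D x * (c - 1) * P x ^ (c - 1 - 1))) x :=
    (hD_x.mul_const c).mul hPowx
  rw [hF_x.deriv]
  -- now pure algebra
  have hAc : A ^ c = x := by
    rw [hA_def, hc_def, ← Real.rpow_mul hx.le, mul_one_div_cancel hab, Real.rpow_one]
  have hAc1 : A ^ (c - 1) = x / A := by
    rw [Real.rpow_sub hA, hAc, Real.rpow_one]
  have hAc2 : A ^ (c - 1 - 1) = x / A / A := by
    rw [Real.rpow_sub hA, hAc1, Real.rpow_one]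
  rw [hPx, hAc1, hAc2, hD_def]
  simp only [hsfx, hgA0, hgB0, hgA1, hgB1, hgA2, hgB2]
  rw [hc_def]
  field_simp
  ring
end

section
/- The Scharfetter–Gummel mean satisfies ∂ₓ²S_{0,-1}(x,x) = -1/(3x) and the geometric mean satisfies ∂ₓ²S_{-1,1}(x,x) = -1/(4x), for all x > 0. -/
open Filter Topology Set

/-- The Scharfetter--Gummel mean `S_{0,-1}`, extended continuously to the diagonal. -/
noncomputable def sgMean (x y : ℝ) : ℝ :=
  if x = y then x else x * y * (Real.log x - Real.log y) / (x - y)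

/-- Closed form of `∂ₜ sgMean t x`, extended by `1/2` on the diagonal. -/
noncomputable def sgG (x : ℝ) : ℝ → ℝ := fun t =>
  if t = x then 1/2 else x * (t - x - x * (Real.log t - Real.log x)) / (t - x) ^ 2

lemma sg_hasDerivAt_off {x t : ℝ} (ht : 0 < t) (hne : t ≠ x) :
    HasDerivAt (fun s => sgMean s x)
      (x * (t - x - x * (Real.log t - Real.log x)) / (t - x) ^ 2) t := by
  have htx : t - x ≠ 0 := sub_ne_zero.mpr hne
  have h1 : HasDerivAt (fun s : ℝ => s * x * (Real.log s - Real.log x))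
      (x * (Real.log t - Real.log x) + t * x * t⁻¹) t := by
    have hl : HasDerivAt (fun s : ℝ => Real.log s - Real.log x) t⁻¹ t :=
      (Real.hasDerivAt_log ht.ne').sub_const _
    have hm : HasDerivAt (fun s : ℝ => s * x) x t := by
      simpa using (hasDerivAt_id t).mul_const x
    exact hm.mul hl
  have h2 : HasDerivAt (fun s : ℝ => s - x) 1 t := (hasDerivAt_id t).sub_const x
  have hF := h1.div h2 htx
  have hev : (fun s => sgMean s x) =ᶠ[𝓝 t]
      (fun s => s * x * (Real.log s - Real.log x) / (s - x)) := by
    filter_upwards [isOpen_ne.mem_nhds hne] with s hs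
    simp [sgMean, hs]
  have h := hF.congr_of_eventuallyEq hev
  refine h.congr_deriv ?_
  field_simp
  ring

lemma sg_eventually_pos_ne {x : ℝ} (hx : 0 < x) :
    ∀ᶠ t in 𝓝[≠] x, 0 < t ∧ t ≠ x := by
  filter_upwards [eventually_nhdsWithin_of_eventually_nhds (eventually_gt_nhds hx),
    self_mem_nhdsWithin] with t h1 h2
  exact ⟨h1, h2⟩

lemma sg_hasDerivAt_diag {x : ℝ} (hx : 0 < x) :
    HasDerivAt (fun s => sgMean s x) (1/2) x := by
  rw [hasDerivAt_iff_tendsto_slope]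
  set N : ℝ → ℝ := fun t => t * x * (Real.log t - Real.log x) - x * (t - x) with hN
  set D : ℝ → ℝ := fun t => (t - x) ^ 2 with hD
  have key : Tendsto (fun t => N t / D t) (𝓝[≠] x) (𝓝 (1/2)) := by
    apply HasDerivAt.lhopital_zero_nhdsNE
      (f' := fun t => x * (Real.log t - Real.log x)) (g' := fun t => 2 * (t - x))
    · filter_upwards [sg_eventually_pos_ne hx] with t ⟨ht, _⟩
      have hl : HasDerivAt (fun s : ℝ => Real.log s - Real.log x) t⁻¹ t :=
        (Real.hasDerivAt_log ht.ne').sub_const _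
      have hm : HasDerivAt (fun s : ℝ => s * x) x t := by
        simpa using (hasDerivAt_id t).mul_const x
      have hsub : HasDerivAt (fun s : ℝ => x * (s - x)) x t := by
        simpa using ((hasDerivAt_id t).sub_const x).const_mul x
      have := (hm.mul hl).sub hsub
      refine this.congr_deriv ?_
      field_simp
      ring
    · filter_upwards with t
      exact (((hasDerivAt_id t).sub_const x).pow 2).congr_deriv (by simp)
    · filter_upwards [self_mem_nhdsWithin] with t ht
      have : t - x ≠ 0 := sub_ne_zero.mpr ht
      positivity
    · have hc : ContinuousAt N x := by
        have : ContinuousAt Real.log x := Real.continuousAt_log hx.ne'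
        fun_prop (disch := exact hx.ne')
      have hval : N x = 0 := by simp [hN]
      rw [← hval]
      exact hc.continuousWithinAt.tendsto
    · have hc : ContinuousAt D x := by fun_prop
      have hval : D x = 0 := by simp [hD]
      rw [← hval]
      exact hc.continuousWithinAt.tendsto
    · have hslope : Tendsto (slope Real.log x) (𝓝[≠] x) (𝓝 x⁻¹) :=
        hasDerivAt_iff_tendsto_slope.mp (Real.hasDerivAt_log hx.ne')
      have := (hslope.const_mul (x/2))
      have hx2 : (x/2) * x⁻¹ = 1/2 := by field_simp
      rw [hx2] at this
      refine this.congr' ?_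
      filter_upwards [self_mem_nhdsWithin] with t ht
      have htx : t - x ≠ 0 := sub_ne_zero.mpr ht
      rw [slope_def_field]
      field_simp
  refine key.congr' ?_
  filter_upwards [sg_eventually_pos_ne hx] with t ⟨ht, hne⟩
  have htx : t - x ≠ 0 := sub_ne_zero.mpr hne
  rw [slope_def_field, sgMean, if_neg hne, sgMean, if_pos rfl]
  simp only [hN, hD]
  field_simp

lemma sg_deriv_eventually {x : ℝ} (hx : 0 < x) :
    deriv (fun t => sgMean t x) =ᶠ[𝓝 x] sgG x := by
  filter_upwards [isOpen_Ioi.mem_nhds hx] with t ht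
  by_cases h : t = x
  · subst h
    rw [(sg_hasDerivAt_diag hx).deriv, sgG, if_pos rfl]
  · rw [(sg_hasDerivAt_off ht h).deriv, sgG, if_neg h]

lemma sgG_hasDerivAt {x : ℝ} (hx : 0 < x) :
    HasDerivAt (sgG x) (-1 / (3 * x)) x := by
  rw [hasDerivAt_iff_tendsto_slope]
  set N : ℝ → ℝ := fun t => x * (t - x) - x ^ 2 * (Real.log t - Real.log x) - (t - x) ^ 2 / 2
    with hN
  set D : ℝ → ℝ := fun t => (t - x) ^ 3 with hD
  have key : Tendsto (fun t => N t / D t) (𝓝[≠] x) (𝓝 (-1 / (3 * x))) := by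
    apply HasDerivAt.lhopital_zero_nhdsNE
      (f' := fun t => x - x ^ 2 * t⁻¹ - (t - x)) (g' := fun t => 3 * (t - x) ^ 2)
    · filter_upwards [sg_eventually_pos_ne hx] with t ⟨ht, _⟩
      have hl : HasDerivAt (fun s : ℝ => x ^ 2 * (Real.log s - Real.log x)) (x ^ 2 * t⁻¹) t :=
        ((Real.hasDerivAt_log ht.ne').sub_const _).const_mul _
      have hm : HasDerivAt (fun s : ℝ => x * (s - x)) x t := by
        simpa using ((hasDerivAt_id t).sub_const x).const_mul x
      have hq : HasDerivAt (fun s : ℝ => (s - x) ^ 2 / 2) (t - x) t := by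
        have := (((hasDerivAt_id t).sub_const x).pow 2).div_const 2
        refine this.congr_deriv ?_
        simp only [id_eq]
        ring
      exact (hm.sub hl).sub hq
    · filter_upwards with t
      exact (((hasDerivAt_id t).sub_const x).pow 3).congr_deriv (by simp)
    · filter_upwards [self_mem_nhdsWithin] with t ht
      have : t - x ≠ 0 := sub_ne_zero.mpr ht
      positivity
    · have hc : ContinuousAt N x := by
        have : ContinuousAt Real.log x := Real.continuousAt_log hx.ne'
        fun_prop (disch := exact hx.ne')
      have hval : N x = 0 := by simp [hN]
      rw [← hval]
      exact hc.continuousWithinAt.tendsto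
    · have hc : ContinuousAt D x := by fun_prop
      have hval : D x = 0 := by simp [hD]
      rw [← hval]
      exact hc.continuousWithinAt.tendsto
    · have hc : Tendsto (fun t : ℝ => -1 / (3 * t)) (𝓝[≠] x) (𝓝 (-1 / (3 * x))) := by
        apply tendsto_nhdsWithin_of_tendsto_nhds
        have : ContinuousAt (fun t : ℝ => -1 / (3 * t)) x := by
          fun_prop (disch := intros; positivity)
        exact this.tendsto
      refine hc.congr' ?_
      filter_upwards [sg_eventually_pos_ne hx] with t ⟨ht, hne⟩
      have htx : t - x ≠ 0 := sub_ne_zero.mpr hne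
      field_simp
      ring
  refine key.congr' ?_
  filter_upwards [sg_eventually_pos_ne hx] with t ⟨ht, hne⟩
  have htx : t - x ≠ 0 := sub_ne_zero.mpr hne
  rw [slope_def_field, sgG, if_neg hne, sgG, if_pos rfl]
  simp only [hN, hD]
  field_simp

lemma geom_hasDerivAt_off {x t : ℝ} (hx : 0 < x) (ht : 0 < t) :
    HasDerivAt (fun s => Real.sqrt (s * x)) (x / (2 * Real.sqrt (t * x))) t := by
  have h1 : HasDerivAt (fun s : ℝ => s * x) x t := by
    simpa using (hasDerivAt_id t).mul_const x
  have h2 : HasDerivAt Real.sqrt (1 / (2 * Real.sqrt (t * x))) (t * x) :=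
    Real.hasDerivAt_sqrt (mul_pos ht hx).ne'
  have := h2.comp t h1
  refine this.congr_deriv ?_
  ring

/-- The Scharfetter--Gummel mean satisfies `∂ₓ² S_{0,-1}(x,x) = -1/(3x)` and the geometric
mean satisfies `∂ₓ² S_{-1,1}(x,x) = -1/(4x)` for all `x > 0`. -/
theorem sg_and_geom_second_deriv_diagonal (x : ℝ) (hx : 0 < x) :
    deriv (deriv (fun t => sgMean t x)) x = -1 / (3 * x) ∧
    deriv (deriv (fun t => Real.sqrt (t * x))) x = -1 / (4 * x) := by
  constructor
  · rw [(sg_deriv_eventually hx).deriv_eq]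
    exact (sgG_hasDerivAt hx).deriv
  · have hev : deriv (fun t => Real.sqrt (t * x)) =ᶠ[𝓝 x]
        (fun t => x / (2 * Real.sqrt (t * x))) := by
      filter_upwards [isOpen_Ioi.mem_nhds hx] with t ht
      exact (geom_hasDerivAt_off hx ht).deriv
    rw [hev.deriv_eq]
    have hsq : Real.sqrt (x * x) = x := Real.sqrt_mul_self hx.le
    have hq : HasDerivAt (fun t : ℝ => 2 * Real.sqrt (t * x)) 1 x := by
      have := (geom_hasDerivAt_off hx hx).const_mul 2
      refine this.congr_deriv ?_
      rw [hsq]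
      field_simp
    have hp : HasDerivAt (fun t : ℝ => x / (2 * Real.sqrt (t * x))) (-1 / (4 * x)) x := by
      have h2x : (2 : ℝ) * Real.sqrt (x * x) ≠ 0 := by
        rw [hsq]; positivity
      have := (hasDerivAt_const x x).div hq h2x
      refine this.congr_deriv ?_
      rw [hsq]
      field_simp
      ring
    exact hp.deriv
end

section
/- Consider the one-dimensional boundary value problem J = -κ(u' - q u) on [0,h] with constant J, constant q ≠ 0, constant κ > 0, and boundary values u(0) = u₀, u(h) = u_h. Then the flux is given by J = (κ/h)(u₀ B(-qh) - u_h B(qh)), where B(r) = r/(e^r - 1) is the Bernoulli function. -/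
/-- Scharfetter--Gummel flux formula: if `u` solves the two-point boundary value problem
`J = -κ (u' - q u)` on `[0,h]` with constant `J`, `q ≠ 0`, `κ > 0` and boundary values
`u(0) = u₀`, `u(h) = u_h`, then `J = (κ/h)(u₀ B(-qh) - u_h B(qh))` with the Bernoulli
function `B(r) = r/(e^r - 1)`. -/
theorem scharfetter_gummel_flux (h κ q J u₀ uh : ℝ) (hh : 0 < h) (hκ : 0 < κ) (hq : q ≠ 0)
    (u u' : ℝ → ℝ)
    (hderiv : ∀ x ∈ Set.Icc (0 : ℝ) h, HasDerivAt u (u' x) x)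
    (hODE : ∀ x ∈ Set.Icc (0 : ℝ) h, J = -κ * (u' x - q * u x))
    (hu0 : u 0 = u₀) (huh : u h = uh) :
    J = (κ / h) * (u₀ * ((-q * h) / (Real.exp (-q * h) - 1)) -
          uh * ((q * h) / (Real.exp (q * h) - 1))) := by
  obtain ⟨c, hc⟩ : ∃ c : ℝ, c = J / (κ * q) := ⟨_, rfl⟩
  set v : ℝ → ℝ := fun x => (u x - c) * Real.exp (-q * x) with hv
  have hκ0 : κ ≠ 0 := ne_of_gt hκ
  have hu' : ∀ x ∈ Set.Icc (0 : ℝ) h, u' x = q * u x - J / κ := by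
    intro x hx
    have := hODE x hx
    field_simp at this ⊢
    linarith
  have hvderiv : ∀ x ∈ Set.Icc (0 : ℝ) h, HasDerivAt v 0 x := by
    intro x hx
    have he : HasDerivAt (fun x => Real.exp (-q * x)) (Real.exp (-q * x) * (-q)) x := by
      simpa using (((hasDerivAt_id x).const_mul (-q)).exp)
    have := ((hderiv x hx).sub_const c).mul he
    refine this.congr_deriv (Eq.symm ?_)
    rw [hu' x hx]
    have : q * c = J / κ := by rw [hc]; field_simp
    linear_combination (-(Real.exp (-q * x))) * this
  have hcont : ContinuousOn v (Set.Icc 0 h) := fun x hx =>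
    ((hvderiv x hx).continuousAt).continuousWithinAt
  have herc := constant_of_has_deriv_right_zero hcont
    (fun x hx => ((hvderiv x (Set.Ico_subset_Icc_self hx)).hasDerivWithinAt))
  have hvh : v h = v 0 := herc h (Set.right_mem_Icc.2 hh.le)
  have hveq : (uh - c) * Real.exp (-q * h) = u₀ - c := by
    simpa [hv, huh, hu0] using hvh
  -- algebra
  have hE : Real.exp (-q * h) = (Real.exp (q * h))⁻¹ := by
    rw [← Real.exp_neg]; ring_nf
  have hE1 : Real.exp (q * h) ≠ 1 := by
    intro hcon
    have := Real.exp_eq_one_iff (q * h) |>.mp hcon  -- maybe wrong name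
    exact (mul_ne_zero hq (ne_of_gt hh)) this
  have hE1' : Real.exp (q * h) - 1 ≠ 0 := sub_ne_zero.2 hE1
  have hEpos : Real.exp (q * h) ≠ 0 := (Real.exp_pos _).ne'
  have hE1'' : Real.exp (-q * h) - 1 ≠ 0 := by
    rw [hE]
    intro hcon
    apply hE1'
    have : (Real.exp (q * h))⁻¹ = 1 := by linarith
    field_simp at this
    linarith
  -- from hveq: c = (u₀ exp(qh) - uh) / (exp(qh) - 1) times ... derive J
  have key : J * (Real.exp (q * h) - 1) = κ * q * (u₀ * Real.exp (q * h) - uh) := by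
    have h2 : (uh - c) = (u₀ - c) * Real.exp (q * h) := by
      rw [hE] at hveq
      field_simp at hveq
      linarith
    have hcq : c * (κ * q) = J := by rw [hc]; field_simp
    linear_combination (-(Real.exp (q * h) - 1)) * hcq + κ * q * h2
  have h1E : (1:ℝ) - Real.exp (q * h) ≠ 0 := by
    intro hcon; apply hE1'; linarith
  rw [hE]
  field_simp [h1E]
  rw [mul_comm h q, show (1:ℝ) - Real.exp (q * h) = -(Real.exp (q * h) - 1) by ring, div_neg, neg_neg,
    div_sub_div_same, mul_div_assoc', eq_div_iff hE1']
  linear_combination key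
end

section
/- For positive reals π_i, π_j, writing π_m = (π_i + π_j)/2, the weighted Stolarsky mean admits the expansion S_{α,β}(π_i, π_j) = π_m + ((α+β)/3 - 1)/(8π_m) · (π_i - π_j)² + O((π_i - π_j)³) as π_j → π_i. In particular, for two Stolarsky means with α + β = α̃ + β̃, the difference S_{α,β}(π_i,π_j) - S_{α̃,β̃}(π_i,π_j) = O((π_i - π_j)³). -/
open Filter Asymptotics

section StolarskyAux

open Real

lemma isBigO_pow_mul {k : ℕ} {g : ℝ → ℝ} (hg : Continuous g) :
    (fun u : ℝ => u ^ k * g u) =O[nhds 0] fun u => u ^ k := by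
  simpa using (isBigO_refl (fun u : ℝ => u ^ k) (nhds 0)).mul
    ((hg.tendsto 0).isBigO_one ℝ)

lemma exp_approx (n : ℕ) (hn : 0 < n) :
    (fun t : ℝ => Real.exp t - ∑ m ∈ Finset.range n, t ^ m / m.factorial)
      =O[nhds 0] fun t => t ^ n := by
  rw [Asymptotics.isBigO_iff]
  refine ⟨(n.succ : ℝ) / (n.factorial * n), ?_⟩
  have h1 : ∀ᶠ t : ℝ in nhds 0, |t| ≤ 1 := by
    have h := Metric.closedBall_mem_nhds (0:ℝ) one_pos
    filter_upwards [h] with t ht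
    simpa [Real.dist_eq] using ht
  filter_upwards [h1] with t ht
  rw [Real.norm_eq_abs, Real.norm_eq_abs, abs_pow, mul_comm]
  exact Real.exp_bound ht hn

lemma exp_approx3 :
    (fun t : ℝ => Real.exp t - (1 + t + t ^ 2 / 2)) =O[nhds 0] fun t => t ^ 3 := by
  have := exp_approx 3 (by norm_num)
  refine this.congr_left fun t => ?_
  simp [Finset.sum_range_succ]

lemma exp_approx4 :
    (fun t : ℝ => Real.exp t - (1 + t + t ^ 2 / 2 + t ^ 3 / 6)) =O[nhds 0] fun t => t ^ 4 := by
  have := exp_approx 4 (by norm_num)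
  refine this.congr_left fun t => ?_
  simp [Finset.sum_range_succ, Nat.factorial]

lemma log_approx3 :
    (fun u : ℝ => Real.log (1 + u) - (u - u ^ 2 / 2 + u ^ 3 / 3)) =O[nhds 0]
      fun u => u ^ 4 := by
  rw [Asymptotics.isBigO_iff]
  refine ⟨2, ?_⟩
  have h1 : ∀ᶠ u : ℝ in nhds 0, |u| ≤ 1/2 := by
    have h := Metric.closedBall_mem_nhds (0:ℝ) (by norm_num : (0:ℝ) < 1/2)
    filter_upwards [h] with t ht
    simpa [Real.dist_eq] using ht
  filter_upwards [h1] with u hu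
  have h2 : |(-u : ℝ)| < 1 := by rw [abs_neg]; linarith
  have := Real.abs_log_sub_add_sum_range_le h2 3
  rw [show (1 : ℝ) - -u = 1 + u by ring] at this
  simp [Finset.sum_range_succ] at this
  rw [Real.norm_eq_abs, Real.norm_eq_abs, abs_pow]
  have h3 : |(-u:ℝ)| ^ 4 / (1 - |(-u:ℝ)|) ≤ 2 * |u| ^ 4 := by
    rw [abs_neg]
    rw [div_le_iff₀ (by linarith [abs_nonneg u])]
    nlinarith [pow_nonneg (abs_nonneg u) 4, abs_nonneg u]
  calc |Real.log (1 + u) - (u - u ^ 2 / 2 + u ^ 3 / 3)|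
      = |(-u + (-u)^2/2 + (-u)^3/3) + Real.log (1 + u)| := by ring_nf
    _ ≤ |(-u:ℝ)| ^ 4 / (1 - |(-u:ℝ)|) := by
        rw [abs_neg]; convert this using 2; ring
    _ ≤ 2 * |u| ^ 4 := h3

lemma log_approx2 :
    (fun u : ℝ => Real.log (1 + u) - (u - u ^ 2 / 2)) =O[nhds 0] fun u => u ^ 3 := by
  have h1 := log_approx3
  have h2 : (fun u : ℝ => u ^ 4) =O[nhds 0] fun u => u ^ 3 := by
    have := isBigO_pow_mul (k := 3) (g := fun u => u) continuous_id
    exact this.congr_left fun u => by ring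
  have h3 : (fun u : ℝ => u ^ 3 / 3) =O[nhds 0] fun u => u ^ 3 := by
    have := isBigO_pow_mul (k := 3) (g := fun _ => (1/3 : ℝ)) continuous_const
    exact this.congr_left fun u => by ring
  have := (h1.trans h2).add h3
  exact this.congr_left fun u => by ring

lemma tendsto_log_one_add :
    Filter.Tendsto (fun u : ℝ => Real.log (1 + u)) (nhds 0) (nhds 0) := by
  have : ContinuousAt (fun u : ℝ => Real.log (1 + u)) 0 :=
    (Real.continuousAt_log (by norm_num)).comp (by fun_prop)
  simpa using this.tendsto

lemma log_isBigO_self :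
    (fun u : ℝ => Real.log (1 + u)) =O[nhds 0] fun u => u := by
  have h1 := log_approx3
  have h2 : (fun u : ℝ => u ^ 4) =O[nhds 0] fun u => u := by
    have := isBigO_pow_mul (k := 1) (g := fun u => u ^ 3) (by continuity)
    exact this.congr (fun u => by ring) (fun u => by ring)
  have h3 : (fun u : ℝ => u - u ^ 2 / 2 + u ^ 3 / 3) =O[nhds 0] fun u => u := by
    have := isBigO_pow_mul (k := 1) (g := fun u => 1 - u / 2 + u ^ 2 / 3) (by continuity)
    exact this.congr (fun u => by ring) (fun u => by ring)
  have := (h1.trans h2).add h3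
  exact this.congr_left fun u => by ring

lemma rpow_expansion (γ : ℝ) :
    (fun u : ℝ => (1 + u) ^ γ -
        (1 + γ * u + γ * (γ - 1) / 2 * u ^ 2 + γ * (γ - 1) * (γ - 2) / 6 * u ^ 3))
      =O[nhds 0] fun u => u ^ 4 := by
  set L : ℝ → ℝ := fun u => Real.log (1 + u) with hLdef
  set Q : ℝ → ℝ := fun u => u - u ^ 2 / 2 + u ^ 3 / 3 with hQdef
  have hLQ : (fun u => L u - Q u) =O[nhds 0] fun u => u ^ 4 := log_approx3
  have hL0 : Filter.Tendsto L (nhds 0) (nhds 0) := tendsto_log_one_add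
  have hLO : L =O[nhds 0] fun u : ℝ => u := log_isBigO_self
  have hQ0 : Filter.Tendsto Q (nhds 0) (nhds 0) := by
    have : Continuous Q := by fun_prop
    simpa [hQdef] using this.tendsto 0
  -- exp expansion composed with γ * L
  have htend : Filter.Tendsto (fun u => γ * L u) (nhds 0) (nhds 0) := by
    simpa using (hL0.const_mul γ)
  have hexp : (fun u => Real.exp (γ * L u) -
      (1 + γ * L u + (γ * L u) ^ 2 / 2 + (γ * L u) ^ 3 / 6)) =O[nhds 0]
      fun u => (γ * L u) ^ 4 := exp_approx4.comp_tendsto htend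
  have hL4 : (fun u => (γ * L u) ^ 4) =O[nhds 0] fun u => u ^ 4 := by
    have := (hLO.pow 4).const_mul_left (γ ^ 4)
    exact this.congr_left fun u => by ring
  have hmain := hexp.trans hL4
  -- now compare the L-polynomial with the target polynomial
  have hsum : (fun u => L u + Q u) =O[nhds 0] fun _ => (1 : ℝ) :=
    ((hL0.add hQ0).isBigO_one ℝ)
  have hsq : (fun u => (L u) ^ 2 + L u * Q u + (Q u) ^ 2) =O[nhds 0] fun _ => (1 : ℝ) := by
    refine Filter.Tendsto.isBigO_one ℝ (c := 0) ?_
    have h2 : Filter.Tendsto (fun u => (L u) ^ 2 + L u * Q u + (Q u) ^ 2) (nhds 0)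
        (nhds (0 ^ 2 + 0 * 0 + 0 ^ 2)) := ((hL0.pow 2).add (hL0.mul hQ0)).add (hQ0.pow 2)
    simpa using h2
  have hd2 : (fun u => (L u) ^ 2 - (Q u) ^ 2) =O[nhds 0] fun u => u ^ 4 := by
    have := hLQ.mul hsum
    exact (this.congr_left fun u => by ring).congr_right fun u => by ring
  have hd3 : (fun u => (L u) ^ 3 - (Q u) ^ 3) =O[nhds 0] fun u => u ^ 4 := by
    have := hLQ.mul hsq
    exact (this.congr_left fun u => by ring).congr_right fun u => by ring
  have hpoly : (fun u => (1 + γ * Q u + (γ * Q u) ^ 2 / 2 + (γ * Q u) ^ 3 / 6) -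
      (1 + γ * u + γ * (γ - 1) / 2 * u ^ 2 + γ * (γ - 1) * (γ - 2) / 6 * u ^ 3))
      =O[nhds 0] fun u => u ^ 4 := by
    have hg : Continuous (fun u : ℝ =>
        γ ^ 2 * (11 / 24 - u / 6 + u ^ 2 / 18) +
        γ ^ 3 * (-(1 / 4) + 7 * u / 24 - 3 * u ^ 2 / 16 + 7 * u ^ 3 / 72 - u ^ 4 / 36 +
          u ^ 5 / 162)) := by continuity
    have := isBigO_pow_mul (k := 4) hg
    exact this.congr_left fun u => by simp only [hQdef]; ring
  have heq : ∀ᶠ u : ℝ in nhds 0, (1 + u) ^ γ = Real.exp (γ * L u) := by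
    have h : ∀ᶠ u : ℝ in nhds 0, (0 : ℝ) < 1 + u := by
      have : Filter.Tendsto (fun u : ℝ => 1 + u) (nhds 0) (nhds 1) := by
        simpa using (continuous_add_left (1:ℝ)).tendsto (0 : ℝ)
      exact this.eventually (eventually_gt_nhds one_pos)
    filter_upwards [h] with u hu
    rw [Real.rpow_def_of_pos hu, mul_comm]
  have hcomb : (fun u => Real.exp (γ * L u) -
      (1 + γ * u + γ * (γ - 1) / 2 * u ^ 2 + γ * (γ - 1) * (γ - 2) / 6 * u ^ 3))
      =O[nhds 0] fun u => u ^ 4 := by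
    have h1 := hLQ.const_mul_left γ
    have h2 := hd2.const_mul_left (γ ^ 2 / 2)
    have h3 := hd3.const_mul_left (γ ^ 3 / 6)
    have := ((hmain.add h1).add h2).add h3 |>.add hpoly
    exact this.congr_left fun u => by ring
  exact hcomb.congr' (by filter_upwards [heq] with u hu; rw [hu]) EventuallyEq.rfl

notation "l0" => nhdsWithin (0:ℝ) {(0:ℝ)}ᶜ

lemma isBigO_div_self {f : ℝ → ℝ} {k : ℕ}
    (h : f =O[l0] fun u : ℝ => u ^ (k + 1)) :
    (fun u => f u / u) =O[l0] fun u => u ^ k := by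
  rw [Asymptotics.isBigO_iff] at h ⊢
  obtain ⟨C, hC⟩ := h
  refine ⟨C, ?_⟩
  filter_upwards [hC, self_mem_nhdsWithin] with u hu hu0
  have hu0' : u ≠ 0 := hu0
  rw [Real.norm_eq_abs, Real.norm_eq_abs, abs_pow] at hu
  rw [Real.norm_eq_abs, Real.norm_eq_abs, abs_pow, abs_div]
  have hpos : (0:ℝ) < |u| := abs_pos.mpr hu0'
  rw [div_le_iff₀ hpos]
  calc |f u| ≤ C * |u| ^ (k+1) := hu
    _ = C * |u| ^ k * |u| := by ring

lemma G_expansion (γ : ℝ) (hγ : γ ≠ 0) :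
    (fun u : ℝ => ((1 + u) ^ γ - 1) / (γ * u) -
        (1 + (γ - 1) / 2 * u + (γ - 1) * (γ - 2) / 6 * u ^ 2)) =O[l0] fun u => u ^ 3 := by
  have hA := (rpow_expansion γ).mono (nhdsWithin_le_nhds (s := {(0:ℝ)}ᶜ))
  have hdiv := isBigO_div_self (k := 3) hA
  have := hdiv.const_mul_left (1 / γ)
  refine this.congr' ?_ EventuallyEq.rfl
  filter_upwards [self_mem_nhdsWithin] with u hu0
  have hu : u ≠ 0 := hu0
  field_simp
  ring

lemma G_tendsto (γ : ℝ) (hγ : γ ≠ 0) :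
    Filter.Tendsto (fun u : ℝ => ((1 + u) ^ γ - 1) / (γ * u)) l0 (nhds 1) := by
  have h1 := (G_expansion γ hγ).trans_tendsto (by
    have : Filter.Tendsto (fun u : ℝ => u ^ 3) (nhds 0) (nhds 0) := by
      simpa using (continuous_pow 3).tendsto (0:ℝ)
    exact this.mono_left nhdsWithin_le_nhds)
  have h2 : Filter.Tendsto (fun u : ℝ =>
      1 + (γ - 1) / 2 * u + (γ - 1) * (γ - 2) / 6 * u ^ 2) l0 (nhds 1) := by
    have hc : Continuous (fun u : ℝ =>
        1 + (γ - 1) / 2 * u + (γ - 1) * (γ - 2) / 6 * u ^ 2) := by continuity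
    have := (hc.tendsto 0).mono_left (nhdsWithin_le_nhds (s := {(0:ℝ)}ᶜ))
    simpa using this
  have := h1.add h2
  simpa using this

lemma G_pos (γ : ℝ) (hγ : γ ≠ 0) :
    ∀ᶠ u : ℝ in l0, 0 < ((1 + u) ^ γ - 1) / (γ * u) :=
  (G_tendsto γ hγ).eventually (eventually_gt_nhds one_pos)

lemma logG_expansion (γ : ℝ) (hγ : γ ≠ 0) :
    (fun u : ℝ => Real.log (((1 + u) ^ γ - 1) / (γ * u)) -
        ((γ - 1) / 2 * u + (γ ^ 2 - 6 * γ + 5) / 24 * u ^ 2)) =O[l0] fun u => u ^ 3 := by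
  set G : ℝ → ℝ := fun u => ((1 + u) ^ γ - 1) / (γ * u) with hGdef
  set A : ℝ → ℝ := fun u => G u - 1 with hAdef
  set p : ℝ → ℝ := fun u => (γ - 1) / 2 * u + (γ - 1) * (γ - 2) / 6 * u ^ 2 with hpdef
  have hA3 : (fun u => A u - p u) =O[l0] fun u => u ^ 3 :=
    (G_expansion γ hγ).congr_left fun u => by simp [hAdef, hpdef, hGdef]; ring
  have hpO : p =O[l0] fun u : ℝ => u := by
    have := (isBigO_pow_mul (k := 1)
      (g := fun u : ℝ => (γ - 1) / 2 + (γ - 1) * (γ - 2) / 6 * u) (by continuity)).mono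
      (nhdsWithin_le_nhds (s := {(0:ℝ)}ᶜ))
    exact this.congr (fun u => by simp [hpdef]; ring) (fun u => by ring)
  have hu3O : (fun u : ℝ => u ^ 3) =O[l0] fun u : ℝ => u := by
    have := (isBigO_pow_mul (k := 1) (g := fun u : ℝ => u ^ 2) (by continuity)).mono
      (nhdsWithin_le_nhds (s := {(0:ℝ)}ᶜ))
    exact this.congr (fun u => by ring) (fun u => by ring)
  have hAO : A =O[l0] fun u : ℝ => u :=
    ((hA3.trans hu3O).add hpO).congr_left fun u => by ring
  have hAtend : Filter.Tendsto A l0 (nhds 0) := by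
    have := (G_tendsto γ hγ).sub (tendsto_const_nhds (x := (1:ℝ)))
    simpa [hAdef] using this
  have hptend : Filter.Tendsto p l0 (nhds 0) := by
    have hc : Continuous p := by simp only [hpdef]; continuity
    have := (hc.tendsto 0).mono_left (nhdsWithin_le_nhds (s := {(0:ℝ)}ᶜ))
    simpa [hpdef] using this
  have hlog : (fun u => Real.log (1 + A u) - (A u - (A u) ^ 2 / 2)) =O[l0]
      fun u => (A u) ^ 3 := log_approx2.comp_tendsto hAtend
  have hlog' : (fun u => Real.log (G u) - (A u - (A u) ^ 2 / 2)) =O[l0] fun u => u ^ 3 :=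
    (hlog.trans (hAO.pow 3)).congr_left fun u => by simp [hAdef]
  have hsq : (fun u => (A u) ^ 2 - (p u) ^ 2) =O[l0] fun u => u ^ 3 := by
    have hsum : (fun u => A u + p u) =O[l0] fun _ => (1:ℝ) :=
      Filter.Tendsto.isBigO_one ℝ (c := 0) (by simpa using hAtend.add hptend)
    exact ((hA3.mul hsum).congr (fun u => by ring) (fun u => by ring))
  have hpoly : (fun u => (p u - (p u) ^ 2 / 2) -
      ((γ - 1) / 2 * u + (γ ^ 2 - 6 * γ + 5) / 24 * u ^ 2)) =O[l0] fun u => u ^ 3 := by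
    have := (isBigO_pow_mul (k := 3)
      (g := fun u : ℝ => -(γ - 1) ^ 2 * (γ - 2) / 12 - (γ - 1) ^ 2 * (γ - 2) ^ 2 / 72 * u)
      (by continuity)).mono (nhdsWithin_le_nhds (s := {(0:ℝ)}ᶜ))
    exact this.congr_left fun u => by simp only [hpdef]; ring
  have := (hlog'.add (hA3.sub (hsq.const_mul_left (1/2)))).add hpoly
  exact this.congr_left fun u => by ring

lemma M_expansion (α β : ℝ) (hαβ : α ≠ β) (hα : α ≠ 0) (hβ : β ≠ 0) :
    (fun u : ℝ => (Real.log (((1 + u) ^ α - 1) / (α * u)) -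
          Real.log (((1 + u) ^ β - 1) / (β * u))) / (α - β) -
        (u / 2 + (α + β - 6) / 24 * u ^ 2)) =O[l0] fun u => u ^ 3 := by
  have hsub : α - β ≠ 0 := sub_ne_zero.mpr hαβ
  have := ((logG_expansion α hα).sub (logG_expansion β hβ)).const_mul_left (1 / (α - β))
  refine this.congr_left fun u => ?_
  field_simp
  ring

lemma M_tendsto (α β : ℝ) (hαβ : α ≠ β) (hα : α ≠ 0) (hβ : β ≠ 0) :
    Filter.Tendsto (fun u : ℝ => (Real.log (((1 + u) ^ α - 1) / (α * u)) -
        Real.log (((1 + u) ^ β - 1) / (β * u))) / (α - β)) l0 (nhds 0) := by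
  have h1 := ((G_tendsto α hα).log one_ne_zero).sub ((G_tendsto β hβ).log one_ne_zero)
  have := (h1.div_const (α - β))
  simpa using this

lemma M_isBigO (α β : ℝ) (hαβ : α ≠ β) (hα : α ≠ 0) (hβ : β ≠ 0) :
    (fun u : ℝ => (Real.log (((1 + u) ^ α - 1) / (α * u)) -
        Real.log (((1 + u) ^ β - 1) / (β * u))) / (α - β)) =O[l0] fun u : ℝ => u := by
  have h1 := M_expansion α β hαβ hα hβ
  have hu3O : (fun u : ℝ => u ^ 3) =O[l0] fun u : ℝ => u := by
    have := (isBigO_pow_mul (k := 1) (g := fun u : ℝ => u ^ 2) (by continuity)).mono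
      (nhdsWithin_le_nhds (s := {(0:ℝ)}ᶜ))
    exact this.congr (fun u => by ring) (fun u => by ring)
  have hpO : (fun u : ℝ => u / 2 + (α + β - 6) / 24 * u ^ 2) =O[l0] fun u : ℝ => u := by
    have := (isBigO_pow_mul (k := 1)
      (g := fun u : ℝ => 1 / 2 + (α + β - 6) / 24 * u) (by continuity)).mono
      (nhdsWithin_le_nhds (s := {(0:ℝ)}ᶜ))
    exact this.congr (fun u => by ring) (fun u => by ring)
  exact ((h1.trans hu3O).add hpO).congr_left fun u => by ring

lemma S_expansion (α β : ℝ) (hαβ : α ≠ β) (hα : α ≠ 0) (hβ : β ≠ 0) :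
    (fun u : ℝ => Real.exp ((Real.log (((1 + u) ^ α - 1) / (α * u)) -
          Real.log (((1 + u) ^ β - 1) / (β * u))) / (α - β)) -
        (1 + u / 2 + (α + β - 3) / 24 * u ^ 2)) =O[l0] fun u => u ^ 3 := by
  set M : ℝ → ℝ := fun u => (Real.log (((1 + u) ^ α - 1) / (α * u)) -
      Real.log (((1 + u) ^ β - 1) / (β * u))) / (α - β) with hMdef
  set q : ℝ → ℝ := fun u => u / 2 + (α + β - 6) / 24 * u ^ 2 with hqdef
  have hM3 : (fun u => M u - q u) =O[l0] fun u => u ^ 3 := M_expansion α β hαβ hα hβ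
  have hMO : M =O[l0] fun u : ℝ => u := M_isBigO α β hαβ hα hβ
  have hMtend : Filter.Tendsto M l0 (nhds 0) := M_tendsto α β hαβ hα hβ
  have hqtend : Filter.Tendsto q l0 (nhds 0) := by
    have hc : Continuous q := by simp only [hqdef]; continuity
    have := (hc.tendsto 0).mono_left (nhdsWithin_le_nhds (s := {(0:ℝ)}ᶜ))
    simpa [hqdef] using this
  have hexp : (fun u => Real.exp (M u) - (1 + M u + (M u) ^ 2 / 2)) =O[l0]
      fun u => (M u) ^ 3 := exp_approx3.comp_tendsto hMtend
  have hexp' := hexp.trans (hMO.pow 3)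
  have hsq : (fun u => (M u) ^ 2 - (q u) ^ 2) =O[l0] fun u => u ^ 3 := by
    have hsum : (fun u => M u + q u) =O[l0] fun _ => (1:ℝ) :=
      Filter.Tendsto.isBigO_one ℝ (c := 0) (by simpa using hMtend.add hqtend)
    exact ((hM3.mul hsum).congr (fun u => by ring) (fun u => by ring))
  have hpoly : (fun u => (1 + q u + (q u) ^ 2 / 2) -
      (1 + u / 2 + (α + β - 3) / 24 * u ^ 2)) =O[l0] fun u => u ^ 3 := by
    have := (isBigO_pow_mul (k := 3)
      (g := fun u : ℝ => (α + β - 6) / 48 + ((α + β - 6) / 24) ^ 2 / 2 * u)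
      (by continuity)).mono (nhdsWithin_le_nhds (s := {(0:ℝ)}ᶜ))
    exact this.congr_left fun u => by simp only [hqdef]; ring
  have := (hexp'.add (hM3.add (hsq.const_mul_left (1/2)))).add hpoly
  exact this.congr_left fun u => by ring

lemma stolarsky_bigO (α β x : ℝ) (hx : 0 < x)
    (hαβ : α ≠ β) (hα : α ≠ 0) (hβ : β ≠ 0) :
    (fun y => stolarskyExt α β x y -
        ((x + y) / 2 + ((α + β) / 3 - 1) / (8 * ((x + y) / 2)) * (x - y) ^ 2))
      =O[nhds x] (fun y => (x - y) ^ 3) := by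
  have hx0 : x ≠ 0 := ne_of_gt hx
  set φ : ℝ → ℝ := fun y => y / x - 1 with hφdef
  have hφc : Filter.Tendsto φ (nhds x) (nhds 0) := by
    have hc : Continuous φ := by simp only [hφdef]; continuity
    have := hc.tendsto x
    simpa [hφdef, div_self hx0] using this
  have hφ : Filter.Tendsto φ (nhdsWithin x {x}ᶜ) l0 := by
    rw [tendsto_nhdsWithin_iff]
    constructor
    · exact hφc.mono_left (nhdsWithin_le_nhds (s := {x}ᶜ))
    · filter_upwards [self_mem_nhdsWithin] with y hy
      have hyx : y ≠ x := hy
      simp only [hφdef, Set.mem_compl_iff, Set.mem_singleton_iff]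
      intro h
      apply hyx
      field_simp at h
      linarith
  set M : ℝ → ℝ := fun u => (Real.log (((1 + u) ^ α - 1) / (α * u)) -
      Real.log (((1 + u) ^ β - 1) / (β * u))) / (α - β) with hMdef
  -- φ-power comparison
  have hφ3 : (fun y => (φ y) ^ 3) =O[nhdsWithin x {x}ᶜ] fun y => (x - y) ^ 3 := by
    have := (isBigO_refl (fun y : ℝ => (x - y) ^ 3)
      (nhdsWithin x {x}ᶜ)).const_mul_left ((-(1 : ℝ) / x) ^ 3)
    refine this.congr_left fun y => ?_
    simp only [hφdef]
    field_simp
    ring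
  -- the exponential side
  have hcomp := ((S_expansion α β hαβ hα hβ).comp_tendsto hφ).trans hφ3
  have hcompx := hcomp.const_mul_left x
  -- identification of stolarskyExt with x * exp (M (φ y))
  have hkey : ∀ᶠ y in nhdsWithin x {x}ᶜ,
      stolarskyExt α β x y = x * Real.exp (M (φ y)) := by
    have hy0 : ∀ᶠ y in nhdsWithin x {x}ᶜ, (0:ℝ) < y :=
      (eventually_gt_nhds hx).filter_mono (nhdsWithin_le_nhds (s := {x}ᶜ))
    have hGαpos := hφ.eventually (G_pos α hα)
    have hGβpos := hφ.eventually (G_pos β hβ)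
    filter_upwards [hy0, hGαpos, hGβpos, self_mem_nhdsWithin] with y hy hGα hGβ hyx
    have hyx' : y ≠ x := hyx
    have hu0 : φ y ≠ 0 := by
      simp only [hφdef]
      intro h
      apply hyx'
      field_simp at h
      linarith
    have h1u : (0:ℝ) < 1 + φ y := by
      simp only [hφdef]
      have : y / x > 0 := div_pos hy hx
      linarith
    set u := φ y with hu
    have hyu : y = x * (1 + u) := by
      simp only [hu, hφdef]
      field_simp
      ring
    -- rewrite powers
    have hyα : y ^ α = x ^ α * (1 + u) ^ α := by
      rw [hyu, Real.mul_rpow (le_of_lt hx) (le_of_lt h1u)]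
    have hyβ : y ^ β = x ^ β * (1 + u) ^ β := by
      rw [hyu, Real.mul_rpow (le_of_lt hx) (le_of_lt h1u)]
    set Gα := ((1 + u) ^ α - 1) / (α * u) with hGαdef
    set Gβ := ((1 + u) ^ β - 1) / (β * u) with hGβdef
    have hGαeq : (1 + u) ^ α - 1 = α * u * Gα := by
      rw [hGαdef]; field_simp
    have hGβeq : (1 + u) ^ β - 1 = β * u * Gβ := by
      rw [hGβdef]; field_simp
    have hxβpos : (0:ℝ) < x ^ β := Real.rpow_pos_of_pos hx β
    have hxαpos : (0:ℝ) < x ^ α := Real.rpow_pos_of_pos hx α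
    have hGβ0 : Gβ ≠ 0 := ne_of_gt hGβ
    have hbase : (β * (x ^ α - y ^ α)) / (α * (x ^ β - y ^ β)) =
        x ^ (α - β) * (Gα / Gβ) := by
      rw [hyα, hyβ, Real.rpow_sub hx]
      have h1 : x ^ α - x ^ α * (1 + u) ^ α = -(x ^ α * (α * u * Gα)) := by
        rw [← hGαeq]; ring
      have h2 : x ^ β - x ^ β * (1 + u) ^ β = -(x ^ β * (β * u * Gβ)) := by
        rw [← hGβeq]; ring
      rw [h1, h2]
      field_simp
    have hbasepos : (0:ℝ) < (β * (x ^ α - y ^ α)) / (α * (x ^ β - y ^ β)) := by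
      rw [hbase]
      exact mul_pos (Real.rpow_pos_of_pos hx _) (div_pos hGα hGβ)
    rw [stolarskyExt, if_neg (by exact fun h => hyx' h.symm)]
    rw [Real.rpow_def_of_pos hbasepos, hbase]
    rw [Real.log_mul (ne_of_gt (Real.rpow_pos_of_pos hx _)) (ne_of_gt (div_pos hGα hGβ))]
    rw [Real.log_rpow hx, Real.log_div (ne_of_gt hGα) hGβ0]
    rw [hMdef]
    have hsub : α - β ≠ 0 := sub_ne_zero.mpr hαβ
    rw [← Real.exp_log hx, ← Real.exp_add]
    congr 1
    rw [Real.log_exp]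
    simp only [hGαdef, hGβdef]
    field_simp
  have hS : (fun y => stolarskyExt α β x y -
      x * (1 + φ y / 2 + (α + β - 3) / 24 * (φ y) ^ 2)) =O[nhdsWithin x {x}ᶜ]
      fun y => (x - y) ^ 3 := by
    refine hcompx.congr' ?_ EventuallyEq.rfl
    filter_upwards [hkey] with y hy
    show x * _ = _
    simp only [Function.comp_apply, hMdef] at hy ⊢
    rw [hy]
    ring
  -- the target side
  set T : ℝ → ℝ := fun y =>
    (x + y) / 2 + ((α + β) / 3 - 1) / (8 * ((x + y) / 2)) * (x - y) ^ 2 with hTdef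
  have h2φ : Filter.Tendsto (fun y => 2 + φ y) (nhdsWithin x {x}ᶜ) (nhds 2) := by
    have := (hφc.const_add 2).mono_left (nhdsWithin_le_nhds (s := {x}ᶜ))
    simpa using this
  have hTbig : (fun y => (φ y) ^ 3 / (2 + φ y)) =O[nhdsWithin x {x}ᶜ]
      fun y => (φ y) ^ 3 := by
    have hinv : Filter.Tendsto (fun y => (2 + φ y)⁻¹) (nhdsWithin x {x}ᶜ)
        (nhds (2⁻¹ : ℝ)) := h2φ.inv₀ (by norm_num)
    have := (isBigO_refl (fun y : ℝ => (φ y) ^ 3) (nhdsWithin x {x}ᶜ)).mul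
      (hinv.isBigO_one ℝ)
    exact this.congr (fun y => by rw [div_eq_mul_inv]) (fun y => by rw [mul_one])
  have hT : (fun y => T y - x * (1 + φ y / 2 + (α + β - 3) / 24 * (φ y) ^ 2))
      =O[nhdsWithin x {x}ᶜ] fun y => (x - y) ^ 3 := by
    have h1 := ((hTbig.const_mul_left (-x * (α + β - 3) / 24)).trans hφ3)
    refine h1.congr' ?_ EventuallyEq.rfl
    have hxy : ∀ᶠ y in nhdsWithin x {x}ᶜ, (0:ℝ) < x + y := by
      have : Filter.Tendsto (fun y : ℝ => x + y) (nhdsWithin x {x}ᶜ) (nhds (x + x)) := by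
        exact (continuous_const.add continuous_id).tendsto x |>.mono_left
          (nhdsWithin_le_nhds (s := {x}ᶜ))
      exact this.eventually (eventually_gt_nhds (by linarith))
    filter_upwards [hxy] with y hy
    have hxy0 : x + y ≠ 0 := ne_of_gt hy
    have h2φ0 : 2 + φ y ≠ 0 := by
      simp only [hφdef]
      field_simp
      intro h
      apply hxy0
      rw [div_eq_zero_iff] at h
      rcases h with h | h <;> linarith
    show -x * (α + β - 3) / 24 * ((φ y) ^ 3 / (2 + φ y)) = T y - _
    simp only [hTdef, hφdef]
    have e1 : 2 + (y / x - 1) = (x + y) / x := by field_simp; ring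
    rw [e1, div_div_eq_mul_div]
    field_simp
    ring
  have hfinal : (fun y => stolarskyExt α β x y - T y) =O[nhdsWithin x {x}ᶜ]
      fun y => (x - y) ^ 3 := (hS.sub hT).congr_left fun y => by ring
  -- extend to nhds x
  rw [Asymptotics.isBigO_iff] at hfinal ⊢
  obtain ⟨C, hC⟩ := hfinal
  refine ⟨C, ?_⟩
  rw [← nhdsNE_sup_pure x, Filter.eventually_sup]
  refine ⟨hC, ?_⟩
  rw [Filter.eventually_pure]
  have hSx : stolarskyExt α β x x = x := by rw [stolarskyExt, if_pos rfl]
  rw [hSx]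
  norm_num

end StolarskyAux

/-- Second-order expansion of the weighted Stolarsky mean about the diagonal:
`S_{α,β}(x,y) = (x+y)/2 + ((α+β)/3 - 1)/(8 (x+y)/2) (x-y)² + O((x-y)³)` as `y → x`,
and consequently two Stolarsky means with the same `α + β` differ by `O((x-y)³)`. -/
theorem stolarsky_expansion_near_diagonal (α β α' β' x : ℝ) (hx : 0 < x)
    (hαβ : α ≠ β) (hα : α ≠ 0) (hβ : β ≠ 0)
    (hαβ' : α' ≠ β') (hα' : α' ≠ 0) (hβ' : β' ≠ 0) :
    (fun y => stolarskyExt α β x y -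
        ((x + y) / 2 + ((α + β) / 3 - 1) / (8 * ((x + y) / 2)) * (x - y) ^ 2))
      =O[nhds x] (fun y => (x - y) ^ 3) ∧
    (α + β = α' + β' →
      (fun y => stolarskyExt α β x y - stolarskyExt α' β' x y) =O[nhds x]
        (fun y => (x - y) ^ 3)) := by
  constructor
  · exact stolarsky_bigO α β x hx hαβ hα hβ
  · intro h
    have h1 := stolarsky_bigO α β x hx hαβ hα hβ
    have h2 := stolarsky_bigO α' β' x hx hαβ' hα' hβ'
    refine (h1.sub h2).congr_left fun y => ?_
    rw [h]
    ring
end
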